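/- Let X = ∂/∂t + Σ_i f_i^A ∂/∂q_i^A + Σ_j F_j^A ∂/∂q_j^A + Σ_i G_A^i ∂/∂p_A^i be a vector field on W_r with dt-component 1, and let Ω_r = Σ dq_i^A ∧ dp_A^i + d(Σ p_A^i q_{i+1}^A − L̂) ∧ dt. Then i(X)Ω_r = 0 holds at a point iff at that point: (a) p_A^{k-1} = ∂L̂/∂q_k^A; (b) f_i^A = q_{i+1}^A for 0 ≤ i ≤ k-1; (c) G_A^0 = ∂L̂/∂q_0^A; and (d) G_A^i = ∂L̂/∂q_i^A − p_A^{i-1} for 1 ≤ i ≤ k-1. -/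

import Mathlib

/-! **Coefficient analysis of the unified dynamical equation `i(X)Ω_r = 0`.**

On `W_r ≅ ℝ × (ℝ^n)^{2k} × (ℝ^n)^k` with coordinates
`(t, q_0, …, q_{2k-1}, p^0, …, p^{k-1})` and with
`Ω_r = Σ dq_i^A ∧ dp_A^i + dF ∧ dt`, `F = Σ p_A^i q_{i+1}^A − L̂`
(`L̂ = L̂(t, q_0, …, q_k)` smooth), a vector field
`X = ∂/∂t + f_i^A ∂/∂q_i^A + F_j^A ∂/∂q_j^A + G_A^i ∂/∂p_A^i` with
`dt`-component `1` (its `q`-components collected into `fq`, its `p`-components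
into `G`) satisfies `i(X)Ω_r = 0` at a point `w` iff:
(a) `p_A^{k-1} = ∂L̂/∂q_k^A` (a constraint on `w`, defining `W_1`);
(b) `fq_i^A = q_{i+1}^A` for `0 ≤ i ≤ k-1`;
(c) `G_A^0 = ∂L̂/∂q_0^A`;
(d) `G_A^i = ∂L̂/∂q_i^A − p_A^{i-1}` for `1 ≤ i ≤ k-1`. -/

variable (n k : ℕ)

abbrev Jet (n k : ℕ) := ℝ × (Fin (2 * k) → Fin n → ℝ)

abbrev Wr (n k : ℕ) := ℝ × (Fin (2 * k) → Fin n → ℝ) × (Fin k → Fin n → ℝ)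

/-- The partial derivative `∂L̂/∂q_j^A`. -/
noncomputable def pd (Lhat : Jet n k → ℝ) (j : Fin (2 * k)) (A : Fin n)
    (x : Jet n k) : ℝ :=
  fderiv ℝ Lhat x ((0 : ℝ), Pi.single j (Pi.single A (1 : ℝ)))

/-- `F = Σ_i p_A^i q_{i+1}^A − L̂`. -/
noncomputable def Ffun (hk : 1 ≤ k) (Lhat : Jet n k → ℝ) (w : Wr n k) : ℝ :=
  (∑ i : Fin k, ∑ A : Fin n,
      w.2.2 i A * w.2.1 ⟨i.1 + 1, by have := i.isLt; omega⟩ A) -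
    Lhat (w.1, w.2.1)

/-- `Ω_r = Σ dq_i^A ∧ dp_A^i + dF ∧ dt` evaluated on two tangent vectors. -/
noncomputable def OmegaR (hk : 1 ≤ k) (Lhat : Jet n k → ℝ)
    (w u v : Wr n k) : ℝ :=
  (∑ i : Fin k, ∑ A : Fin n,
      (u.2.1 ⟨i.1, by have := i.isLt; omega⟩ A * v.2.2 i A -
       v.2.1 ⟨i.1, by have := i.isLt; omega⟩ A * u.2.2 i A)) +
    (fderiv ℝ (Ffun n k hk Lhat) w u * v.1 -
     fderiv ℝ (Ffun n k hk Lhat) w v * u.1)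

/-! ### Auxiliary machinery -/

noncomputable def cQ (j : Fin (2 * k)) (A : Fin n) : Wr n k →L[ℝ] ℝ :=
  (ContinuousLinearMap.proj (R := ℝ) (φ := fun _ : Fin n => ℝ) A).comp
    ((ContinuousLinearMap.proj (R := ℝ) (φ := fun _ : Fin (2 * k) => Fin n → ℝ) j).comp
      ((ContinuousLinearMap.fst ℝ _ _).comp (ContinuousLinearMap.snd ℝ ℝ _)))

noncomputable def cP (i : Fin k) (A : Fin n) : Wr n k →L[ℝ] ℝ :=
  (ContinuousLinearMap.proj (R := ℝ) (φ := fun _ : Fin n => ℝ) A).comp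
    ((ContinuousLinearMap.proj (R := ℝ) (φ := fun _ : Fin k => Fin n → ℝ) i).comp
      ((ContinuousLinearMap.snd ℝ _ _).comp (ContinuousLinearMap.snd ℝ ℝ _)))

noncomputable def piJ : Wr n k →L[ℝ] Jet n k :=
  (ContinuousLinearMap.fst ℝ ℝ _).prod
    ((ContinuousLinearMap.fst ℝ _ _).comp (ContinuousLinearMap.snd ℝ ℝ _))

@[simp] lemma cQ_apply (j A) (w : Wr n k) : cQ n k j A w = w.2.1 j A := rfl
@[simp] lemma cP_apply (i A) (w : Wr n k) : cP n k i A w = w.2.2 i A := rfl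
@[simp] lemma piJ_apply (w : Wr n k) : piJ n k w = (w.1, w.2.1) := rfl

lemma hasFDerivAt_Ffun (hk : 1 ≤ k) (Lhat : Jet n k → ℝ)
    (hL : Differentiable ℝ Lhat) (w : Wr n k) :
    HasFDerivAt (Ffun n k hk Lhat)
      ((∑ i : Fin k, ∑ A : Fin n,
        (w.2.2 i A • cQ n k ⟨i.1 + 1, by have := i.isLt; omega⟩ A
          + w.2.1 ⟨i.1 + 1, by have := i.isLt; omega⟩ A • cP n k i A))
        - (fderiv ℝ Lhat (w.1, w.2.1)).comp (piJ n k)) w := by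
  apply HasFDerivAt.sub
  · apply HasFDerivAt.fun_sum
    intro i _
    apply HasFDerivAt.fun_sum
    intro A _
    exact ((cP n k i A).hasFDerivAt (x := w)).mul
      ((cQ n k ⟨i.1 + 1, by have := i.isLt; omega⟩ A).hasFDerivAt (x := w))
  · exact ((hL (w.1, w.2.1)).hasFDerivAt).comp w (piJ n k).hasFDerivAt

lemma fderiv_Ffun_apply (hk : 1 ≤ k) (Lhat : Jet n k → ℝ)
    (hL : Differentiable ℝ Lhat) (w u : Wr n k) :
    fderiv ℝ (Ffun n k hk Lhat) w u =
      (∑ i : Fin k, ∑ A : Fin n,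
        (w.2.2 i A * u.2.1 ⟨i.1 + 1, by have := i.isLt; omega⟩ A
          + w.2.1 ⟨i.1 + 1, by have := i.isLt; omega⟩ A * u.2.2 i A))
        - fderiv ℝ Lhat (w.1, w.2.1) (u.1, u.2.1) := by
  rw [(hasFDerivAt_Ffun n k hk Lhat hL w).fderiv]
  simp [ContinuousLinearMap.sum_apply]

lemma clm_decomp (D : Jet n k →L[ℝ] ℝ) (u : Jet n k) :
    D u = u.1 * D (1, 0) +
      ∑ j : Fin (2 * k), ∑ A : Fin n,
        u.2 j A * D (0, Pi.single j (Pi.single A (1 : ℝ))) := by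
  have hu : u = u.1 • ((1 : ℝ), (0 : Fin (2 * k) → Fin n → ℝ)) +
      ∑ j : Fin (2 * k), ∑ A : Fin n,
        u.2 j A • (((0 : ℝ), Pi.single j (Pi.single A (1 : ℝ))) : Jet n k) := by
    rw [Prod.ext_iff]
    constructor
    · simp [Prod.fst_sum]
    · funext j' A'
      simp only [Prod.snd_add, Prod.snd_sum]
      simp [Finset.sum_apply, Pi.single_apply, Finset.sum_ite_eq,
        Finset.sum_ite_eq', mul_ite]
  conv_lhs => rw [hu]
  rw [map_add, map_smul, map_sum, smul_eq_mul]
  congr 1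
  refine Finset.sum_congr rfl fun j _ => ?_
  rw [map_sum]
  refine Finset.sum_congr rfl fun A _ => ?_
  rw [map_smul, smul_eq_mul]

lemma pd_high_zero (Lhat : Jet n k → ℝ) (hL : Differentiable ℝ Lhat)
    (hdep : ∀ (t : ℝ) (q q' : Fin (2 * k) → Fin n → ℝ),
      (∀ i : Fin (2 * k), i.1 ≤ k → q i = q' i) → Lhat (t, q) = Lhat (t, q'))
    (j : Fin (2 * k)) (hj : k < j.1) (A : Fin n) (x : Jet n k) :
    pd n k Lhat j A x = 0 := by
  unfold pd
  set v : Jet n k := ((0 : ℝ), Pi.single j (Pi.single A (1 : ℝ))) with hv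
  have hγ : HasDerivAt (fun s : ℝ => x + s • v) v 0 := by
    simpa using ((hasDerivAt_id (0 : ℝ)).smul_const v).const_add x
  have hcomp : HasDerivAt (fun s : ℝ => Lhat (x + s • v)) (fderiv ℝ Lhat x v) 0 := by
    have hx : HasFDerivAt Lhat (fderiv ℝ Lhat x) (x + (0 : ℝ) • v) := by
      simpa using (hL x).hasFDerivAt
    exact hx.comp_hasDerivAt 0 hγ
  have hconst : (fun s : ℝ => Lhat (x + s • v)) = fun _ => Lhat x := by
    funext s
    have h2 : Lhat (x.1, (x + s • v).2) = Lhat (x.1, x.2) := by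
      apply hdep
      intro i hi
      have hij : i ≠ j := by
        intro h; rw [h] at hi; omega
      simp [hv, Pi.single_eq_of_ne hij]
    have h1 : (x + s • v).1 = x.1 := by simp [hv]
    calc Lhat (x + s • v) = Lhat ((x + s • v).1, (x + s • v).2) := by rw [Prod.mk.eta]
    _ = Lhat (x.1, (x + s • v).2) := by rw [h1]
    _ = Lhat x := by rw [h2, Prod.mk.eta]
  rw [hconst] at hcomp
  exact hcomp.unique (hasDerivAt_const 0 _)

lemma master (hk : 1 ≤ k) (Lhat : Jet n k → ℝ)
    (hL : Differentiable ℝ Lhat) (w : Wr n k)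
    (fq : Fin (2 * k) → Fin n → ℝ) (G : Fin k → Fin n → ℝ) (v : Wr n k) :
    OmegaR n k hk Lhat w ((1 : ℝ), fq, G) v =
      (∑ i : Fin k, ∑ A : Fin n,
        fq ⟨i.1, by have := i.isLt; omega⟩ A * v.2.2 i A)
      - (∑ i : Fin k, ∑ A : Fin n,
        v.2.1 ⟨i.1, by have := i.isLt; omega⟩ A * G i A)
      - (∑ i : Fin k, ∑ A : Fin n,
        w.2.2 i A * v.2.1 ⟨i.1 + 1, by have := i.isLt; omega⟩ A)
      - (∑ i : Fin k, ∑ A : Fin n,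
        w.2.1 ⟨i.1 + 1, by have := i.isLt; omega⟩ A * v.2.2 i A)
      + (∑ j : Fin (2 * k), ∑ A : Fin n,
        v.2.1 j A * pd n k Lhat j A (w.1, w.2.1))
      + ((∑ i : Fin k, ∑ A : Fin n,
          (w.2.2 i A * fq ⟨i.1 + 1, by have := i.isLt; omega⟩ A
            + w.2.1 ⟨i.1 + 1, by have := i.isLt; omega⟩ A * G i A))
        - (∑ j : Fin (2 * k), ∑ A : Fin n,
          fq j A * pd n k Lhat j A (w.1, w.2.1))) * v.1 := by
  unfold OmegaR
  rw [fderiv_Ffun_apply n k hk Lhat hL w ((1 : ℝ), fq, G),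
    fderiv_Ffun_apply n k hk Lhat hL w v,
    clm_decomp n k (fderiv ℝ Lhat (w.1, w.2.1)) (((1 : ℝ), fq, G).1, ((1 : ℝ), fq, G).2.1),
    clm_decomp n k (fderiv ℝ Lhat (w.1, w.2.1)) (v.1, v.2.1)]
  simp only [pd, Finset.sum_sub_distrib, Finset.sum_add_distrib]
  ring

/-- Key index-shifting identity over ℕ-ranges. -/
lemma aux_shift (hk : 1 ≤ k) (VQ PD GG P : ℕ → Fin n → ℝ)
    (hPDhigh : ∀ j, k < j → ∀ A, PD j A = 0)
    (hPDk : ∀ A, PD k A = P (k - 1) A)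
    (hPD0 : ∀ A, PD 0 A = GG 0 A)
    (hPDmid : ∀ j, 1 ≤ j → j < k → ∀ A, PD j A = GG j A + P (j - 1) A) :
    (∑ j ∈ Finset.range (2 * k), ∑ A : Fin n, VQ j A * PD j A) =
      (∑ j ∈ Finset.range k, ∑ A : Fin n, VQ j A * GG j A) +
      (∑ j ∈ Finset.range k, ∑ A : Fin n, P j A * VQ (j + 1) A) := by
  have h1 : (∑ j ∈ Finset.range (2 * k), ∑ A : Fin n, VQ j A * PD j A) =
      ∑ j ∈ Finset.range (k + 1), ∑ A : Fin n, VQ j A * PD j A := by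
    refine (Finset.sum_subset (Finset.range_subset_range.mpr (by omega)) ?_).symm
    intro x hx hx'
    simp only [Finset.mem_range] at hx hx'
    exact Finset.sum_eq_zero fun A _ => by rw [hPDhigh x (by omega)]; ring
  rw [h1, Finset.sum_range_succ]
  have h2 : ∀ j ∈ Finset.range k,
      (∑ A : Fin n, VQ j A * PD j A) =
        (∑ A : Fin n, VQ j A * GG j A) +
        (if j = 0 then 0 else ∑ A : Fin n, VQ j A * P (j - 1) A) := by
    intro j hj
    simp only [Finset.mem_range] at hj
    rcases Nat.eq_zero_or_pos j with h | h
    · subst h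
      rw [if_pos rfl, add_zero]
      exact Finset.sum_congr rfl fun A _ => by rw [hPD0]
    · rw [if_neg (by omega), ← Finset.sum_add_distrib]
      exact Finset.sum_congr rfl fun A _ => by rw [hPDmid j h hj]; ring
  rw [Finset.sum_congr rfl h2, Finset.sum_add_distrib]
  have h3 : (∑ j ∈ Finset.range k,
        (if j = 0 then 0 else ∑ A : Fin n, VQ j A * P (j - 1) A)) +
      (∑ A : Fin n, VQ k A * PD k A) =
      ∑ j ∈ Finset.range k, ∑ A : Fin n, P j A * VQ (j + 1) A := by
    have hek : (if k = 0 then (0:ℝ) else ∑ A : Fin n, VQ k A * P (k - 1) A) =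
        ∑ A : Fin n, VQ k A * PD k A := by
      rw [if_neg (by omega)]
      exact Finset.sum_congr rfl fun A _ => by rw [hPDk]
    rw [← hek, ← Finset.sum_range_succ (fun j => if j = 0 then (0:ℝ)
        else ∑ A : Fin n, VQ j A * P (j - 1) A) k, Finset.sum_range_succ']
    simp only [Nat.add_sub_cancel, if_true, add_zero]
    exact Finset.sum_congr rfl fun j _ => by
      rw [if_neg (Nat.succ_ne_zero j)]
      exact Finset.sum_congr rfl fun A _ => by ring
  rw [add_assoc, h3]

lemma fin_sum_ext (m : ℕ) (F : Fin m → ℝ) :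
    (∑ j : Fin m, F j) =
      ∑ j ∈ Finset.range m, if h : j < m then F ⟨j, h⟩ else 0 := by
  rw [← Fin.sum_univ_eq_sum_range (fun j => if h : j < m then F ⟨j, h⟩ else 0) m]
  exact Finset.sum_congr rfl fun j _ => by simp [j.isLt]

lemma collapse {ι : Type*} [Fintype ι] [DecidableEq ι] {m : ℕ}
    (c : Fin m → Fin n → ℝ) (e : Fin m → ι) (j : ι) (A : Fin n) :
    (∑ i : Fin m, ∑ A' : Fin n,
        c i A' * (Pi.single j (Pi.single A (1 : ℝ)) : ι → Fin n → ℝ) (e i) A')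
      = ∑ i : Fin m, if e i = j then c i A else 0 := by
  refine Finset.sum_congr rfl fun i _ => ?_
  by_cases h : e i = j
  · simp [h, Pi.single_apply, mul_ite, Finset.sum_ite_eq']
  · simp [Pi.single_eq_of_ne h, h]

noncomputable def tot {α : Type*} [Zero α] (m : ℕ) (f : Fin m → α) : ℕ → α :=
  fun j => if h : j < m then f ⟨j, h⟩ else 0

lemma tot_pos {α : Type*} [Zero α] (m : ℕ) (f : Fin m → α) {j : ℕ} (h : j < m) :
    tot m f j = f ⟨j, h⟩ := dif_pos h

lemma tot_neg {α : Type*} [Zero α] (m : ℕ) (f : Fin m → α) {j : ℕ} (h : ¬ j < m) :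
    tot m f j = 0 := dif_neg h

lemma sum_fin_to_range (m : ℕ) (F : Fin m → ℝ) (g : ℕ → ℝ)
    (hg : ∀ (j : ℕ) (h : j < m), g j = F ⟨j, h⟩) :
    (∑ j : Fin m, F j) = ∑ j ∈ Finset.range m, g j := by
  rw [fin_sum_ext m F]
  refine Finset.sum_congr rfl fun j hj => ?_
  rw [Finset.mem_range] at hj
  rw [dif_pos hj, hg j hj]

lemma sum_ite_none {ι : Type*} [DecidableEq ι] {m : ℕ} (c : Fin m → ℝ)
    (e : Fin m → ι) (j : ι) (h : ∀ i, e i ≠ j) :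
    (∑ i : Fin m, if e i = j then c i else 0) = 0 :=
  Finset.sum_eq_zero fun i _ => if_neg (h i)

lemma sum_ite_one {ι : Type*} [DecidableEq ι] {m : ℕ} (c : Fin m → ℝ)
    (e : Fin m → ι) (j : ι) (i₀ : Fin m) (h0 : e i₀ = j)
    (h : ∀ i, e i = j → i = i₀) :
    (∑ i : Fin m, if e i = j then c i else 0) = c i₀ := by
  rw [Finset.sum_eq_single i₀]
  · rw [if_pos h0]
  · exact fun b _ hb => if_neg (fun hbj => hb (h b hbj))
  · simp

lemma collapse' {ι : Type*} [Fintype ι] [DecidableEq ι] {m : ℕ}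
    (c : Fin m → Fin n → ℝ) (e : Fin m → ι) (j : ι) (A : Fin n) :
    (∑ i : Fin m, ∑ A' : Fin n,
        (Pi.single j (Pi.single A (1 : ℝ)) : ι → Fin n → ℝ) (e i) A' * c i A')
      = ∑ i : Fin m, if e i = j then c i A else 0 := by
  refine Finset.sum_congr rfl fun i _ => ?_
  by_cases h : e i = j
  · simp [h, Pi.single_apply, mul_ite, Finset.sum_ite_eq]
  · simp [Pi.single_eq_of_ne h, h]

/-- **Characterization of `i(X)Ω_r = 0` in coordinates.** -/
theorem iota_X_OmegaR_eq_zero_iff (hk : 1 ≤ k)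
    (Lhat : Jet n k → ℝ) (hL : ContDiff ℝ (⊤ : ℕ∞) Lhat)
    (hdep : ∀ (t : ℝ) (q q' : Fin (2 * k) → Fin n → ℝ),
      (∀ i : Fin (2 * k), i.1 ≤ k → q i = q' i) → Lhat (t, q) = Lhat (t, q'))
    (w : Wr n k)
    (fq : Fin (2 * k) → Fin n → ℝ) (G : Fin k → Fin n → ℝ) :
    (∀ v : Wr n k, OmegaR n k hk Lhat w ((1 : ℝ), fq, G) v = 0) ↔
    ((∀ A : Fin n,
        w.2.2 ⟨k - 1, by omega⟩ A = pd n k Lhat ⟨k, by omega⟩ A (w.1, w.2.1)) ∧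
     (∀ (i : ℕ) (hi : i < k) (A : Fin n),
        fq ⟨i, by omega⟩ A = w.2.1 ⟨i + 1, by omega⟩ A) ∧
     (∀ A : Fin n,
        G ⟨0, by omega⟩ A = pd n k Lhat ⟨0, by omega⟩ A (w.1, w.2.1)) ∧
     (∀ (i : ℕ) (hi1 : 1 ≤ i) (hi : i < k) (A : Fin n),
        G ⟨i, hi⟩ A = pd n k Lhat ⟨i, by omega⟩ A (w.1, w.2.1) -
          w.2.2 ⟨i - 1, by omega⟩ A)) := by
  have hLd : Differentiable ℝ Lhat := hL.differentiable (by simp)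
  constructor
  · intro h
    refine ⟨?_, ?_, ?_, ?_⟩
    · -- (a)
      intro A
      have H := h (0, Pi.single (⟨k, by omega⟩ : Fin (2 * k)) (Pi.single A (1 : ℝ)), 0)
      rw [master n k hk Lhat hLd w fq G] at H
      simp only [Pi.zero_apply, mul_zero, zero_mul, Finset.sum_const_zero,
        add_zero, zero_add, sub_zero, zero_sub, neg_zero, mul_one] at H
      rw [collapse' n G
            (fun i' : Fin k => (⟨i'.1, by have := i'.isLt; omega⟩ : Fin (2 * k)))
            (⟨k, by omega⟩ : Fin (2 * k)) A,
          collapse n w.2.2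
            (fun i' : Fin k => (⟨i'.1 + 1, by have := i'.isLt; omega⟩ : Fin (2 * k)))
            (⟨k, by omega⟩ : Fin (2 * k)) A,
          collapse' n (fun j A' => pd n k Lhat j A' (w.1, w.2.1))
            (fun j : Fin (2 * k) => j) (⟨k, by omega⟩ : Fin (2 * k)) A,
          sum_ite_none _ _ _ (fun i' hi' => by
            have := i'.isLt; simp only [Fin.mk.injEq] at hi'; omega),
          sum_ite_one _ _ _ (⟨k - 1, by omega⟩ : Fin k)
            (by simp only [Fin.mk.injEq, Fin.val_mk]; omega)
            (fun i' hi' => by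
              rcases i' with ⟨a, halt⟩
              simp only [Fin.mk.injEq, Fin.val_mk] at hi' ⊢; omega),
          sum_ite_one _ _ _ (⟨k, by omega⟩ : Fin (2 * k)) rfl (fun _ hh => hh)] at H
      linarith [H]
    · -- (b)
      intro i hi A
      have H := h (0, 0, Pi.single (⟨i, hi⟩ : Fin k) (Pi.single A (1 : ℝ)))
      rw [master n k hk Lhat hLd w fq G] at H
      simp only [Pi.zero_apply, mul_zero, zero_mul, Finset.sum_const_zero,
        add_zero, zero_add, sub_zero, zero_sub, neg_zero, mul_one] at H
      rw [collapse n (fun i' A' => fq ⟨i'.1, by have := i'.isLt; omega⟩ A')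
            (fun i' : Fin k => i') (⟨i, hi⟩ : Fin k) A,
          collapse n (fun i' A' => w.2.1 ⟨i'.1 + 1, by have := i'.isLt; omega⟩ A')
            (fun i' : Fin k => i') (⟨i, hi⟩ : Fin k) A,
          sum_ite_one _ _ _ (⟨i, hi⟩ : Fin k) rfl (fun _ hh => hh),
          sum_ite_one _ _ _ (⟨i, hi⟩ : Fin k) rfl (fun _ hh => hh)] at H
      linarith [H]
    · -- (c)
      intro A
      have H := h (0, Pi.single (⟨0, by omega⟩ : Fin (2 * k)) (Pi.single A (1 : ℝ)), 0)
      rw [master n k hk Lhat hLd w fq G] at H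
      simp only [Pi.zero_apply, mul_zero, zero_mul, Finset.sum_const_zero,
        add_zero, zero_add, sub_zero, zero_sub, neg_zero, mul_one] at H
      rw [collapse' n G
            (fun i' : Fin k => (⟨i'.1, by have := i'.isLt; omega⟩ : Fin (2 * k)))
            (⟨0, by omega⟩ : Fin (2 * k)) A,
          collapse n w.2.2
            (fun i' : Fin k => (⟨i'.1 + 1, by have := i'.isLt; omega⟩ : Fin (2 * k)))
            (⟨0, by omega⟩ : Fin (2 * k)) A,
          collapse' n (fun j A' => pd n k Lhat j A' (w.1, w.2.1))
            (fun j : Fin (2 * k) => j) (⟨0, by omega⟩ : Fin (2 * k)) A,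
          sum_ite_one _ _ _ (⟨0, by omega⟩ : Fin k)
            (by simp only [Fin.mk.injEq, Fin.val_mk])
            (fun i' hi' => by
              rcases i' with ⟨a, halt⟩
              simp only [Fin.mk.injEq, Fin.val_mk] at hi' ⊢; omega),
          sum_ite_none _ _ _ (fun i' hi' => by
            simp only [Fin.mk.injEq] at hi'; omega),
          sum_ite_one _ _ _ (⟨0, by omega⟩ : Fin (2 * k)) rfl (fun _ hh => hh)] at H
      linarith [H]
    · -- (d)
      intro i hi1 hi A
      have H := h (0, Pi.single (⟨i, by omega⟩ : Fin (2 * k)) (Pi.single A (1 : ℝ)), 0)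
      rw [master n k hk Lhat hLd w fq G] at H
      simp only [Pi.zero_apply, mul_zero, zero_mul, Finset.sum_const_zero,
        add_zero, zero_add, sub_zero, zero_sub, neg_zero, mul_one] at H
      rw [collapse' n G
            (fun i' : Fin k => (⟨i'.1, by have := i'.isLt; omega⟩ : Fin (2 * k)))
            (⟨i, by omega⟩ : Fin (2 * k)) A,
          collapse n w.2.2
            (fun i' : Fin k => (⟨i'.1 + 1, by have := i'.isLt; omega⟩ : Fin (2 * k)))
            (⟨i, by omega⟩ : Fin (2 * k)) A,
          collapse' n (fun j A' => pd n k Lhat j A' (w.1, w.2.1))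
            (fun j : Fin (2 * k) => j) (⟨i, by omega⟩ : Fin (2 * k)) A,
          sum_ite_one _ _ _ (⟨i, hi⟩ : Fin k)
            (by simp only [Fin.mk.injEq, Fin.val_mk])
            (fun i' hi' => by
              rcases i' with ⟨a, halt⟩
              simp only [Fin.mk.injEq, Fin.val_mk] at hi' ⊢; omega),
          sum_ite_one _ _ _ (⟨i - 1, by omega⟩ : Fin k)
            (by simp only [Fin.mk.injEq, Fin.val_mk]; omega)
            (fun i' hi' => by
              rcases i' with ⟨a, halt⟩
              simp only [Fin.mk.injEq, Fin.val_mk] at hi' ⊢; omega),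
          sum_ite_one _ _ _ (⟨i, by omega⟩ : Fin (2 * k)) rfl (fun _ hh => hh)] at H
      linarith [H]
  · rintro ⟨ha, hb, hc, hd⟩ v
    rw [master n k hk Lhat hLd w fq G v]
    have haux : ∀ Y : ℕ → Fin n → ℝ,
        (∑ j ∈ Finset.range (2 * k), ∑ A : Fin n,
          Y j A * tot (2 * k) (fun j A => pd n k Lhat j A (w.1, w.2.1)) j A) =
        (∑ j ∈ Finset.range k, ∑ A : Fin n, Y j A * tot k G j A) +
        (∑ j ∈ Finset.range k, ∑ A : Fin n, tot k w.2.2 j A * Y (j + 1) A) := by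
      intro Y
      refine aux_shift n k hk Y _ _ _ ?_ ?_ ?_ ?_
      · intro j hj A
        by_cases h2 : j < 2 * k
        · simp only [tot]
          rw [dif_pos h2]
          exact pd_high_zero n k Lhat hLd hdep ⟨j, h2⟩ hj A (w.1, w.2.1)
        · simp only [tot]
          rw [dif_neg h2]
          rfl
      · intro A
        simp only [tot]
        rw [dif_pos (show k < 2 * k by omega), dif_pos (show k - 1 < k by omega)]
        exact (ha A).symm
      · intro A
        simp only [tot]
        rw [dif_pos (show 0 < 2 * k by omega), dif_pos (show 0 < k by omega)]
        exact (hc A).symm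
      · intro j hj1 hjk A
        simp only [tot]
        rw [dif_pos (show j < 2 * k by omega), dif_pos hjk,
          dif_pos (show j - 1 < k by omega)]
        have := hd j hj1 hjk A
        linarith [this]
    have bA5 : (∑ j : Fin (2 * k), ∑ A : Fin n,
          v.2.1 j A * pd n k Lhat j A (w.1, w.2.1)) =
        ∑ j ∈ Finset.range (2 * k), ∑ A : Fin n,
          tot (2 * k) v.2.1 j A *
            tot (2 * k) (fun j A => pd n k Lhat j A (w.1, w.2.1)) j A := by
      refine sum_fin_to_range (2 * k) _ _ fun j h => ?_
      refine Finset.sum_congr rfl fun A _ => ?_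
      simp only [tot]
      rw [dif_pos h, dif_pos h]
    have bU : (∑ j : Fin (2 * k), ∑ A : Fin n,
          fq j A * pd n k Lhat j A (w.1, w.2.1)) =
        ∑ j ∈ Finset.range (2 * k), ∑ A : Fin n,
          tot (2 * k) fq j A *
            tot (2 * k) (fun j A => pd n k Lhat j A (w.1, w.2.1)) j A := by
      refine sum_fin_to_range (2 * k) _ _ fun j h => ?_
      refine Finset.sum_congr rfl fun A _ => ?_
      simp only [tot]
      rw [dif_pos h, dif_pos h]
    have bA2 : (∑ i : Fin k, ∑ A : Fin n,
          v.2.1 ⟨i.1, by have := i.isLt; omega⟩ A * G i A) =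
        ∑ j ∈ Finset.range k, ∑ A : Fin n,
          tot (2 * k) v.2.1 j A * tot k G j A := by
      refine sum_fin_to_range k _ _ fun j h => ?_
      refine Finset.sum_congr rfl fun A _ => ?_
      simp only [tot]
      rw [dif_pos (show j < 2 * k by omega), dif_pos h]
    have bA3 : (∑ i : Fin k, ∑ A : Fin n,
          w.2.2 i A * v.2.1 ⟨i.1 + 1, by have := i.isLt; omega⟩ A) =
        ∑ j ∈ Finset.range k, ∑ A : Fin n,
          tot k w.2.2 j A * tot (2 * k) v.2.1 (j + 1) A := by
      refine sum_fin_to_range k _ _ fun j h => ?_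
      refine Finset.sum_congr rfl fun A _ => ?_
      simp only [tot]
      rw [dif_pos h, dif_pos (show j + 1 < 2 * k by omega)]
    have bS1 : (∑ i : Fin k, ∑ A : Fin n,
          w.2.2 i A * fq ⟨i.1 + 1, by have := i.isLt; omega⟩ A) =
        ∑ j ∈ Finset.range k, ∑ A : Fin n,
          tot k w.2.2 j A * tot (2 * k) fq (j + 1) A := by
      refine sum_fin_to_range k _ _ fun j h => ?_
      refine Finset.sum_congr rfl fun A _ => ?_
      simp only [tot]
      rw [dif_pos h, dif_pos (show j + 1 < 2 * k by omega)]
    have bS2 : (∑ i : Fin k, ∑ A : Fin n,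
          w.2.1 ⟨i.1 + 1, by have := i.isLt; omega⟩ A * G i A) =
        ∑ j ∈ Finset.range k, ∑ A : Fin n,
          tot (2 * k) fq j A * tot k G j A := by
      refine sum_fin_to_range k _ _ fun j h => ?_
      refine Finset.sum_congr rfl fun A _ => ?_
      simp only [tot]
      rw [dif_pos (show j < 2 * k by omega), dif_pos h]
      exact congrArg (· * G ⟨j, h⟩ A) (hb j h A)
    have e14 : (∑ i : Fin k, ∑ A : Fin n,
          fq ⟨i.1, by have := i.isLt; omega⟩ A * v.2.2 i A) =
        ∑ i : Fin k, ∑ A : Fin n,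
          w.2.1 ⟨i.1 + 1, by have := i.isLt; omega⟩ A * v.2.2 i A := by
      refine Finset.sum_congr rfl fun i _ => Finset.sum_congr rfl fun A _ => ?_
      exact congrArg (· * v.2.2 i A) (hb i.1 i.isLt A)
    rw [e14, bA2, bA3, bA5, haux (tot (2 * k) v.2.1)]
    simp only [Finset.sum_add_distrib]
    rw [bS1, bS2, bU, haux (tot (2 * k) fq)]
    ring
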